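/- Let n ≥ 2, k ≥ 1 be integers, γ ∈ (0,1), ε ∈ (0,1], δ ∈ (0,1], and set c = γ(n-1)/k. Let N₁ and N₂ be (possibly dependent) random variables defined on a common probability space such that N₁ - 1 is distributed as Bin(n-1, γ/k) and N₂ is distributed as Bin(n-1, γ/k). If c ≥ max{14·log(2/δ)/ε², 27/ε}, then P[N₁ ≥ e^ε · N₂] ≤ δ. -/

import Mathlib

set_option maxHeartbeats 4000000

open Finset

/-- MGF-type bound: `∑ C(m,i) p^i q^{m-i} e^{s i} ≤ exp (m p (e^s - 1))`. -/
lemma sumExp (m : ℕ) (p : ℝ) (hp0 : 0 ≤ p) (hp1 : p ≤ 1) (s : ℝ) :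
    ∑ i ∈ Finset.range (m+1), (m.choose i : ℝ) * p^i * (1-p)^(m-i) * Real.exp (s*i)
      ≤ Real.exp ((m:ℝ)*p*(Real.exp s - 1)) := by
  have h1 : ∑ i ∈ Finset.range (m+1), (m.choose i : ℝ) * p^i * (1-p)^(m-i) * Real.exp (s*i)
      = (p * Real.exp s + (1-p))^m := by
    rw [add_pow]
    apply Finset.sum_congr rfl
    intro i _
    rw [mul_pow, mul_comm s (i:ℝ), Real.exp_nat_mul]
    ring
  rw [h1]
  have h2 : p * Real.exp s + (1-p) ≤ Real.exp (p * (Real.exp s - 1)) := by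
    have := Real.add_one_le_exp (p * (Real.exp s - 1))
    linarith
  have hbase : 0 ≤ p * Real.exp s + (1-p) := by
    have := Real.exp_pos s
    nlinarith
  calc (p * Real.exp s + (1-p))^m ≤ (Real.exp (p * (Real.exp s - 1)))^m := by
        exact pow_le_pow_left₀ hbase h2 m
    _ = Real.exp ((m:ℝ)*p*(Real.exp s - 1)) := by
        rw [← Real.exp_nat_mul]; ring_nf

/-- Upper-tail Chernoff sum bound. -/
lemma binTail (m : ℕ) (p : ℝ) (hp0 : 0 ≤ p) (hp1 : p ≤ 1) (t : ℝ) (ht : 0 ≤ t) (a : ℕ) :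
    ∑' j : ℕ, ENNReal.ofReal ((m.choose (a+j) : ℝ) * p^(a+j) * (1-p)^(m-(a+j)))
      ≤ ENNReal.ofReal (Real.exp ((m:ℝ)*p*(Real.exp t - 1) - t*a)) := by
  set pmf : ℕ → ℝ := fun i => (m.choose i : ℝ) * p^i * (1-p)^(m-i) with hpmf
  have hq : 0 ≤ 1 - p := by linarith
  have hpmf0 : ∀ i, 0 ≤ pmf i := fun i => by positivity
  have key : ∀ j : ℕ, ENNReal.ofReal (pmf (a+j))
      ≤ ENNReal.ofReal (Real.exp (-(t*a)) * (pmf (a+j) * Real.exp (t*(a+j)))) := by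
    intro j
    apply ENNReal.ofReal_le_ofReal
    have h1 : (1:ℝ) ≤ Real.exp (-(t*a)) * Real.exp (t*(a+j)) := by
      rw [← Real.exp_add]
      apply Real.one_le_exp
      have : 0 ≤ t * j := by positivity
      push_cast
      nlinarith
    calc pmf (a+j) = pmf (a+j) * 1 := by ring
      _ ≤ pmf (a+j) * (Real.exp (-(t*a)) * Real.exp (t*(a+j))) :=
          mul_le_mul_of_nonneg_left h1 (hpmf0 _)
      _ = Real.exp (-(t*a)) * (pmf (a+j) * Real.exp (t*(a+j))) := by ring
  calc ∑' j : ℕ, ENNReal.ofReal (pmf (a+j))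
      ≤ ∑' j : ℕ, ENNReal.ofReal (Real.exp (-(t*a)) * (pmf (a+j) * Real.exp (t*(a+j)))) :=
        ENNReal.tsum_le_tsum key
    _ ≤ ∑' i : ℕ, ENNReal.ofReal (Real.exp (-(t*a)) * (pmf i * Real.exp (t*i))) := by
        have := ENNReal.tsum_comp_le_tsum_of_injective (add_right_injective a)
          (fun i => ENNReal.ofReal (Real.exp (-(t*a)) * (pmf i * Real.exp (t*i))))
        simpa [Nat.cast_add] using this
    _ = ∑ i ∈ Finset.range (m+1),
          ENNReal.ofReal (Real.exp (-(t*a)) * (pmf i * Real.exp (t*i))) := by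
        apply tsum_eq_sum
        intro i hi
        have : m.choose i = 0 := Nat.choose_eq_zero_of_lt (by
          simp only [Finset.mem_range, not_lt] at hi; omega)
        simp [hpmf, this]
    _ = ENNReal.ofReal (∑ i ∈ Finset.range (m+1),
          Real.exp (-(t*a)) * (pmf i * Real.exp (t*i))) := by
        rw [ENNReal.ofReal_sum_of_nonneg]
        intro i _
        have := hpmf0 i
        positivity
    _ ≤ ENNReal.ofReal (Real.exp ((m:ℝ)*p*(Real.exp t - 1) - t*a)) := by
        apply ENNReal.ofReal_le_ofReal
        rw [← Finset.mul_sum]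
        have hs := sumExp m p hp0 hp1 t
        calc Real.exp (-(t*a)) * ∑ i ∈ Finset.range (m+1), pmf i * Real.exp (t*i)
            ≤ Real.exp (-(t*a)) * Real.exp ((m:ℝ)*p*(Real.exp t - 1)) := by
              apply mul_le_mul_of_nonneg_left _ (Real.exp_pos _).le
              simpa [hpmf, mul_assoc] using hs
          _ = Real.exp ((m:ℝ)*p*(Real.exp t - 1) - t*a) := by
              rw [← Real.exp_add]; ring_nf

/-- Lower-tail Chernoff sum bound. -/
lemma binHead (m : ℕ) (p : ℝ) (hp0 : 0 ≤ p) (hp1 : p ≤ 1) (t : ℝ) (ht : 0 ≤ t) (b : ℕ) :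
    ∑ j ∈ Finset.range (b+1), ENNReal.ofReal ((m.choose j : ℝ) * p^j * (1-p)^(m-j))
      ≤ ENNReal.ofReal (Real.exp ((m:ℝ)*p*(Real.exp (-t) - 1) + t*b)) := by
  set pmf : ℕ → ℝ := fun i => (m.choose i : ℝ) * p^i * (1-p)^(m-i) with hpmf
  have hq : 0 ≤ 1 - p := by linarith
  have hpmf0 : ∀ i, 0 ≤ pmf i := fun i => by positivity
  calc ∑ j ∈ Finset.range (b+1), ENNReal.ofReal (pmf j)
      = ENNReal.ofReal (∑ j ∈ Finset.range (b+1), pmf j) := by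
        rw [ENNReal.ofReal_sum_of_nonneg (fun i _ => hpmf0 i)]
    _ ≤ ENNReal.ofReal (Real.exp ((m:ℝ)*p*(Real.exp (-t) - 1) + t*b)) := by
        apply ENNReal.ofReal_le_ofReal
        have step1 : ∑ j ∈ Finset.range (b+1), pmf j
            ≤ Real.exp (t*b) * ∑ j ∈ Finset.range (b+1), pmf j * Real.exp (-t*j) := by
          rw [Finset.mul_sum]
          apply Finset.sum_le_sum
          intro j hj
          have hjb : (j:ℝ) ≤ b := by
            have := Finset.mem_range.mp hj; exact_mod_cast Nat.lt_succ_iff.mp this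
          have h1 : (1:ℝ) ≤ Real.exp (t*b) * Real.exp (-t*j) := by
            rw [← Real.exp_add]
            apply Real.one_le_exp
            nlinarith
          calc pmf j = pmf j * 1 := by ring
            _ ≤ pmf j * (Real.exp (t*b) * Real.exp (-t*j)) :=
                mul_le_mul_of_nonneg_left h1 (hpmf0 _)
            _ = Real.exp (t*b) * (pmf j * Real.exp (-t*j)) := by ring
        have step2 : ∑ j ∈ Finset.range (b+1), pmf j * Real.exp (-t*j)
            ≤ ∑ j ∈ Finset.range (m+1), pmf j * Real.exp (-t*j) := by
          rcases le_total (b+1) (m+1) with h | h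
          · apply Finset.sum_le_sum_of_subset_of_nonneg (Finset.range_subset_range.mpr h)
            intro i _ _
            have := hpmf0 i; positivity
          · rw [← Finset.sum_subset (Finset.range_subset_range.mpr h)]
            intro i _ hi
            have : m.choose i = 0 := Nat.choose_eq_zero_of_lt (by
              simp only [Finset.mem_range, not_lt] at hi; omega)
            simp [hpmf, this]
        have step3 : ∑ j ∈ Finset.range (m+1), pmf j * Real.exp (-t*j)
            ≤ Real.exp ((m:ℝ)*p*(Real.exp (-t) - 1)) := by
          simpa [hpmf, mul_assoc] using sumExp m p hp0 hp1 (-t)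
        calc ∑ j ∈ Finset.range (b+1), pmf j
            ≤ Real.exp (t*b) * ∑ j ∈ Finset.range (b+1), pmf j * Real.exp (-t*j) := step1
          _ ≤ Real.exp (t*b) * Real.exp ((m:ℝ)*p*(Real.exp (-t) - 1)) := by
              apply mul_le_mul_of_nonneg_left (le_trans step2 step3) (Real.exp_pos _).le
          _ = Real.exp ((m:ℝ)*p*(Real.exp (-t) - 1) + t*b) := by
              rw [← Real.exp_add]; ring_nf

lemma expE1 {ε : ℝ} (h0 : 0 < ε) (h1 : ε ≤ 1) :
    Real.exp (0.4*ε) ≤ 1 + 0.4*ε + 0.095*ε^2 := by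
  have hx0 : (0:ℝ) ≤ 0.4*ε := by linarith
  have hx1 : 0.4*ε ≤ 1 := by linarith
  have hb := Real.exp_bound' hx0 hx1 (n := 3) (by norm_num)
  rw [show (3:ℕ) = 2 + 1 from rfl] at hb
  simp only [Finset.sum_range_succ, Finset.sum_range_zero, Nat.factorial] at hb
  norm_num at hb
  nlinarith [pow_le_pow_left₀ h0.le h1 2, sq_nonneg ε, mul_pos h0 h0]

lemma expE2 {ε : ℝ} (h0 : 0 < ε) (h1 : ε ≤ 1) :
    Real.exp (-(0.37*ε)) ≤ 1 - 0.37*ε + 0.0685*ε^2 := by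
  have habs : |(-(0.37*ε))| ≤ 1 := by rw [abs_neg, abs_of_nonneg (by linarith)]; linarith
  have hb := Real.exp_bound habs (n := 4) (by norm_num)
  rw [show (4:ℕ) = 3 + 1 from rfl] at hb
  simp only [Finset.sum_range_succ, Finset.sum_range_zero, Nat.factorial] at hb
  rw [abs_neg, abs_of_nonneg (by linarith : (0:ℝ) ≤ 0.37*ε)] at hb
  have hb' := (abs_sub_le_iff.mp hb).1
  norm_num at hb' ⊢
  nlinarith [sq_nonneg ε, pow_pos h0 3, pow_pos h0 4,
    pow_le_pow_left₀ h0.le h1 3, pow_le_pow_left₀ h0.le h1 4]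

lemma expE3 {ε : ℝ} (h0 : 0 ≤ ε) : 1 + ε + ε^2/2 ≤ Real.exp ε := by
  have := Real.sum_le_exp_of_nonneg h0 3
  rw [show (3:ℕ) = 2 + 1 from rfl] at this
  simp only [Finset.sum_range_succ, Finset.sum_range_zero, Nat.factorial] at this
  norm_num at this
  linarith

open MeasureTheory
open scoped ENNReal

theorem stmt1 {Ω : Type*} [MeasurableSpace Ω] (μ : Measure Ω) [IsProbabilityMeasure μ]
    (n k : ℕ) (hn : 2 ≤ n) (hk : 1 ≤ k)
    (γ ε δ : ℝ) (hγ : γ ∈ Set.Ioo (0:ℝ) 1) (hε : ε ∈ Set.Ioc (0:ℝ) 1)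
    (hδ : δ ∈ Set.Ioc (0:ℝ) 1)
    (N₁ N₂ : Ω → ℕ) (hN₁meas : Measurable N₁) (hN₂meas : Measurable N₂)
    (hN₁zero : μ {ω | N₁ ω = 0} = 0)
    (hN₁ : ∀ j : ℕ, μ {ω | N₁ ω = j + 1}
      = ENNReal.ofReal (((n - 1).choose j : ℝ) * (γ / k) ^ j * (1 - γ / k) ^ (n - 1 - j)))
    (hN₂ : ∀ j : ℕ, μ {ω | N₂ ω = j}
      = ENNReal.ofReal (((n - 1).choose j : ℝ) * (γ / k) ^ j * (1 - γ / k) ^ (n - 1 - j)))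
    (hc : max (14 * Real.log (2 / δ) / ε ^ 2) (27 / ε) ≤ γ * ((n:ℝ) - 1) / k) :
    μ {ω | Real.exp ε * (N₂ ω : ℝ) ≤ (N₁ ω : ℝ)} ≤ ENNReal.ofReal δ := by
  obtain ⟨hγ0, hγ1⟩ := hγ
  obtain ⟨hε0, hε1⟩ := hε
  obtain ⟨hδ0, hδ1⟩ := hδ
  have hk1 : (1:ℝ) ≤ (k:ℝ) := by exact_mod_cast hk
  set m : ℕ := n - 1 with hm
  set p : ℝ := γ / k with hp
  have hp0 : 0 < p := div_pos hγ0 (by linarith)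
  have hp1 : p < 1 := lt_of_le_of_lt (div_le_self hγ0.le hk1) hγ1
  set c : ℝ := (m:ℝ) * p with hcc
  have hmcast : ((m:ℕ):ℝ) = (n:ℝ) - 1 := by
    have : (1:ℕ) ≤ n := by omega
    push_cast [hm, Nat.cast_sub this]
    ring
  have hceq : γ * ((n:ℝ) - 1) / k = c := by
    rw [hcc, hmcast, hp]; field_simp
  rw [hceq] at hc
  have hc14 : 14 * Real.log (2/δ) / ε^2 ≤ c := le_trans (le_max_left _ _) hc
  have hc27 : 27 / ε ≤ c := le_trans (le_max_right _ _) hc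
  have hcpos : 0 < c := lt_of_lt_of_le (by positivity) hc27
  set L : ℝ := Real.log (2/δ) with hLdef
  have hL0 : 0 < L := Real.log_pos (by rw [lt_div_iff₀ hδ0]; linarith)
  have hεc : 27 ≤ ε * c := by
    rw [div_le_iff₀ hε0] at hc27; linarith [hc27]
  have hLc : 14 * L ≤ ε^2 * c := by
    rw [div_le_iff₀ (by positivity : (0:ℝ) < ε^2)] at hc14; linarith [hc14]
  -- thresholds
  set b : ℕ := ⌊(1 - 0.39*ε)*c⌋₊ with hbdef
  have hb_le : (b:ℝ) ≤ (1 - 0.39*ε)*c := Nat.floor_le (by nlinarith)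
  have hb_lt : (1 - 0.39*ε)*c < (b:ℝ) + 1 := Nat.lt_floor_add_one _
  set A : ℝ := Real.exp ε * ((b:ℝ)+1) with hAdef
  have hA0 : 0 < A := by positivity
  set a : ℕ := ⌈A⌉₊ - 1 with hadef
  have hceil1 : 1 ≤ ⌈A⌉₊ := Nat.one_le_ceil_iff.mpr hA0
  have ha1 : a + 1 = ⌈A⌉₊ := by omega
  have haA : A - 1 ≤ (a:ℝ) := by
    have h1 : ((a:ℝ) + 1) = (⌈A⌉₊ : ℝ) := by exact_mod_cast congrArg (Nat.cast (R := ℝ)) ha1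
    have h2 := Nat.le_ceil A
    linarith [h1 ▸ h2]
  -- key inequality (I): a ≥ (1+0.47 ε) c
  have hexpε := expE3 hε0.le
  have hIa : (1 + 0.47*ε)*c ≤ (a:ℝ) := by
    have h1 : Real.exp ε * ((1 - 0.39*ε)*c) ≤ A := by
      have := (Real.exp_pos ε).le
      apply mul_le_mul_of_nonneg_left hb_lt.le this
    have h2 : (1 + 0.47*ε)*c + 1 ≤ Real.exp ε * ((1 - 0.39*ε)*c) := by
      have key : (1 + 0.47*ε) + ε/27 ≤ Real.exp ε * (1 - 0.39*ε) := by
        have hpos : (0:ℝ) < 1 - 0.39*ε := by linarith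
        have hmul : (1 + ε + ε^2/2) * (1 - 0.39*ε) ≤ Real.exp ε * (1 - 0.39*ε) :=
          mul_le_mul_of_nonneg_right hexpε hpos.le
        have hcube : ε^3 ≤ ε^2 := by nlinarith
        have hsq : ε^2 ≤ ε := by nlinarith
        nlinarith
      have h3 : 1 ≤ (ε/27) * c := by
        rw [div_mul_eq_mul_div, le_div_iff₀ (by norm_num : (0:ℝ) < 27)]
        linarith
      nlinarith
    linarith
  -- event inclusion
  have hsub : {ω | Real.exp ε * (N₂ ω : ℝ) ≤ (N₁ ω : ℝ)}
      ⊆ {ω | N₂ ω ≤ b} ∪ {ω | a + 1 ≤ N₁ ω} := by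
    intro ω hω
    simp only [Set.mem_setOf_eq] at hω
    by_cases h : N₂ ω ≤ b
    · exact Or.inl h
    · right
      have hb1 : (b:ℝ) + 1 ≤ (N₂ ω : ℝ) := by exact_mod_cast (by omega : b + 1 ≤ N₂ ω)
      have hAN : A ≤ (N₁ ω : ℝ) := by
        refine le_trans ?_ hω
        exact mul_le_mul_of_nonneg_left hb1 (Real.exp_pos ε).le
      have := Nat.ceil_le.mpr hAN
      simp only [Set.mem_setOf_eq]
      omega
  refine le_trans (measure_mono hsub) (le_trans (measure_union_le _ _) ?_)
  -- lower tail bound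
  have hlow : μ {ω | N₂ ω ≤ b} ≤ ENNReal.ofReal (δ/2) := by
    have hset : {ω | N₂ ω ≤ b} = ⋃ j ∈ Finset.range (b+1), {ω | N₂ ω = j} := by
      ext ω; simp only [Set.mem_setOf_eq, Set.mem_iUnion, Finset.mem_range]
      constructor
      · intro h; exact ⟨N₂ ω, by omega, rfl⟩
      · rintro ⟨j, hj, hje⟩; omega
    rw [hset]
    refine le_trans (measure_biUnion_finset_le _ _) ?_
    have hsum : ∑ j ∈ Finset.range (b+1), μ {ω | N₂ ω = j}
        = ∑ j ∈ Finset.range (b+1),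
            ENNReal.ofReal ((m.choose j : ℝ) * p^j * (1-p)^(m-j)) := by
      apply Finset.sum_congr rfl
      intro j _
      exact hN₂ j
    rw [hsum]
    refine le_trans (binHead m p hp0.le hp1.le (0.37*ε) (by linarith) b) ?_
    apply ENNReal.ofReal_le_ofReal
    have hE2 := expE2 hε0 hε1
    have hexpo : (m:ℝ)*p*(Real.exp (-(0.37*ε)) - 1) + (0.37*ε)*b ≤ -L := by
      have h1 : (0.37*ε)*(b:ℝ) ≤ (0.37*ε)*((1 - 0.39*ε)*c) :=
        mul_le_mul_of_nonneg_left hb_le (by linarith)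
      have h2 : c*(Real.exp (-(0.37*ε)) - 1) + (0.37*ε)*((1 - 0.39*ε)*c) ≤ -L := by
        have hbr : (Real.exp (-(0.37*ε)) - 1) + (0.37*ε)*(1 - 0.39*ε) ≤ -(ε^2/14) := by
          nlinarith [sq_nonneg ε]
        have : c*((Real.exp (-(0.37*ε)) - 1) + (0.37*ε)*(1 - 0.39*ε)) ≤ c*(-(ε^2/14)) :=
          mul_le_mul_of_nonneg_left hbr hcpos.le
        nlinarith
      rw [← hcc]
      nlinarith
    calc Real.exp ((m:ℝ)*p*(Real.exp (-(0.37*ε)) - 1) + (0.37*ε)*b)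
        ≤ Real.exp (-L) := Real.exp_le_exp.mpr hexpo
      _ = δ/2 := by
          rw [hLdef, ← Real.log_inv, Real.exp_log (by positivity), inv_div]
  -- upper tail bound
  have hup : μ {ω | a + 1 ≤ N₁ ω} ≤ ENNReal.ofReal (δ/2) := by
    have hsub2 : {ω | a + 1 ≤ N₁ ω} ⊆ ⋃ j : ℕ, {ω | N₁ ω = (a + j) + 1} := by
      intro ω hω
      simp only [Set.mem_setOf_eq] at hω
      exact Set.mem_iUnion.mpr ⟨N₁ ω - a - 1, by simp only [Set.mem_setOf_eq]; omega⟩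
    refine le_trans (measure_mono hsub2) (le_trans (measure_iUnion_le _) ?_)
    have hsum : ∑' j : ℕ, μ {ω | N₁ ω = (a + j) + 1}
        = ∑' j : ℕ, ENNReal.ofReal ((m.choose (a+j) : ℝ) * p^(a+j) * (1-p)^(m-(a+j))) := by
      apply tsum_congr
      intro j
      exact hN₁ (a + j)
    rw [hsum]
    refine le_trans (binTail m p hp0.le hp1.le (0.4*ε) (by linarith) a) ?_
    apply ENNReal.ofReal_le_ofReal
    have hE1 := expE1 hε0 hε1
    have hexpo : (m:ℝ)*p*(Real.exp (0.4*ε) - 1) - (0.4*ε)*a ≤ -L := by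
      have h1 : (0.4*ε)*((1 + 0.47*ε)*c) ≤ (0.4*ε)*(a:ℝ) :=
        mul_le_mul_of_nonneg_left hIa (by linarith)
      have h2 : c*(Real.exp (0.4*ε) - 1) - (0.4*ε)*((1 + 0.47*ε)*c) ≤ -L := by
        have hbr : (Real.exp (0.4*ε) - 1) - (0.4*ε)*(1 + 0.47*ε) ≤ -(ε^2/14) := by
          nlinarith [sq_nonneg ε]
        have : c*((Real.exp (0.4*ε) - 1) - (0.4*ε)*(1 + 0.47*ε)) ≤ c*(-(ε^2/14)) :=
          mul_le_mul_of_nonneg_left hbr hcpos.le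
        nlinarith
      rw [← hcc]
      nlinarith
    calc Real.exp ((m:ℝ)*p*(Real.exp (0.4*ε) - 1) - (0.4*ε)*a)
        ≤ Real.exp (-L) := Real.exp_le_exp.mpr hexpo
      _ = δ/2 := by
          rw [hLdef, ← Real.log_inv, Real.exp_log (by positivity), inv_div]
  calc μ {ω | N₂ ω ≤ b} + μ {ω | a + 1 ≤ N₁ ω}
      ≤ ENNReal.ofReal (δ/2) + ENNReal.ofReal (δ/2) := add_le_add hlow hup
    _ = ENNReal.ofReal δ := by
        rw [← ENNReal.ofReal_add (by linarith) (by linarith)]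
        norm_num
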